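/- For n ≥ 3, the mincut graph of the Cartesian product K_n □ K_2 is isomorphic to the graph obtained from K_n □ K_2 by adding one new vertex joined to all 2n existing vertices (the vertex join of K_n □ K_2). -/

import Mathlib

open SimpleGraph

variable {V : Type*}

/-- `X` is an edge-cut of `G`: a set of edges of `G` whose deletion disconnects `G`. -/
def IsEdgeCut (G : SimpleGraph V) (X : Set (Sym2 V)) : Prop :=
  X ⊆ G.edgeSet ∧ ¬ (G.deleteEdges X).Connected

/-- `X` is a minimum edge-cut (mincut) of `G`. -/
def IsMinCut (G : SimpleGraph V) (X : Set (Sym2 V)) : Prop :=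
  IsEdgeCut G X ∧ ∀ Y : Set (Sym2 V), IsEdgeCut G Y → X.ncard ≤ Y.ncard

/-- The edge connectivity of `G`: minimum cardinality of an edge-cut. -/
noncomputable def edgeConn (G : SimpleGraph V) : ℕ :=
  sInf {n | ∃ X : Set (Sym2 V), IsEdgeCut G X ∧ X.ncard = n}

/-- The mincut graph `X(G)`: intersection graph of the minimum edge-cuts of `G`. -/
def mincutGraph (G : SimpleGraph V) : SimpleGraph {X : Set (Sym2 V) // IsMinCut G X} :=
  SimpleGraph.fromRel (fun A B => (A.1 ∩ B.1).Nonempty)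

/-- The vertex join of `G`: add one new vertex (`none`) adjacent to all vertices of `G`. -/
def vertexJoin {α : Type*} (G : SimpleGraph α) : SimpleGraph (Option α) :=
  SimpleGraph.fromRel (fun a b =>
    (a = none ∧ b ≠ none) ∨ ∃ x y : α, a = some x ∧ b = some y ∧ G.Adj x y)

namespace MincutAux

open Finset

attribute [local instance] Classical.propDecidable

variable (n : ℕ)

abbrev VV := Fin n × Fin 2

abbrev GG : SimpleGraph (VV n) := (⊤ : SimpleGraph (Fin n)) □ (⊤ : SimpleGraph (Fin 2))

lemma adj_iff (u w : VV n) :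
    (GG n).Adj u w ↔ (u.1 ≠ w.1 ∧ u.2 = w.2) ∨ (u.2 ≠ w.2 ∧ u.1 = w.1) := by
  simp [GG, boxProd_adj, and_comm]

/-- star of a vertex -/
def star (v : VV n) : Set (Sym2 (VV n)) := {e | e ∈ (GG n).edgeSet ∧ v ∈ e}

/-- the matching cut -/
def M : Set (Sym2 (VV n)) := {e | ∃ a : Fin n, e = s((a, 0), (a, 1))}

/-- ordered crossing pairs -/
noncomputable def cross (S : Finset (VV n)) : Finset (VV n × VV n) :=
  Finset.univ.filter (fun p => p.1 ∈ S ∧ p.2 ∉ S ∧ (GG n).Adj p.1 p.2)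

/-- the cut determined by a vertex set -/
noncomputable def cutEdges (S : Finset (VV n)) : Finset (Sym2 (VV n)) :=
  (cross n S).image (fun p => s(p.1, p.2))

lemma mem_cutEdges {S : Finset (VV n)} {e : Sym2 (VV n)} :
    e ∈ cutEdges n S ↔ ∃ p : VV n × VV n, p.1 ∈ S ∧ p.2 ∉ S ∧ (GG n).Adj p.1 p.2 ∧ e = s(p.1, p.2) := by
  simp only [cutEdges, mem_image, cross, mem_filter, mem_univ, true_and]
  exact ⟨fun ⟨p, h, he⟩ => ⟨p, h.1, h.2.1, h.2.2, he.symm⟩,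
    fun ⟨p, h1, h2, h3, he⟩ => ⟨p, ⟨h1, h2, h3⟩, he.symm⟩⟩

lemma card_cutEdges (S : Finset (VV n)) : (cutEdges n S).card = (cross n S).card := by
  apply Finset.card_image_of_injOn
  intro p hp q hq h
  simp only [Finset.mem_coe, cross, mem_filter, mem_univ, true_and] at hp hq
  rcases Sym2.eq_iff.mp h with ⟨h1, h2⟩ | ⟨h1, h2⟩
  · exact Prod.ext h1 h2
  · exact absurd (h2 ▸ hq.1 : p.2 ∈ S) hp.2.1

lemma cutEdges_compl (S : Finset (VV n)) : cutEdges n Sᶜ = cutEdges n S := by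
  ext e
  simp only [mem_cutEdges, Finset.mem_compl]
  constructor
  · rintro ⟨⟨x, y⟩, h1, h2, h3, rfl⟩
    exact ⟨(y, x), not_not.mp h2, h1, h3.symm, Sym2.eq_swap.symm⟩
  · rintro ⟨⟨x, y⟩, h1, h2, h3, rfl⟩
    exact ⟨(y, x), h2, not_not.mpr h1, h3.symm, Sym2.eq_swap.symm⟩

lemma cutEdges_singleton (v : VV n) : (cutEdges n {v} : Set (Sym2 (VV n))) = star n v := by
  ext e
  rw [Finset.mem_coe, mem_cutEdges]
  constructor
  · rintro ⟨⟨x, y⟩, hx, hy, hadj, rfl⟩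
    rw [Finset.mem_singleton] at hx
    subst hx
    exact ⟨(GG n).mem_edgeSet.mpr hadj, Sym2.mem_mk_left _ _⟩
  · rintro ⟨he, hv⟩
    revert he hv
    refine Sym2.ind (fun x y => ?_) e
    intro he hv
    rw [SimpleGraph.mem_edgeSet] at he
    rcases Sym2.mem_iff.mp hv with rfl | rfl
    · exact ⟨(v, y), Finset.mem_singleton_self v,
        by simp [Finset.mem_singleton]; exact he.ne', he, rfl⟩
    · exact ⟨(v, x), Finset.mem_singleton_self v,
        by simp [Finset.mem_singleton]; exact he.ne, he.symm, Sym2.eq_swap.symm⟩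

lemma fin2 (i : Fin 2) : i = 0 ∨ i = 1 := by fin_cases i <;> simp

/-- the first copy of `K_n` -/
noncomputable def copy0 : Finset (VV n) := Finset.univ.filter (fun v : VV n => v.2 = 0)

lemma cutEdges_copy0 : (cutEdges n (copy0 n) : Set (Sym2 (VV n))) = M n := by
  ext e
  rw [Finset.mem_coe, mem_cutEdges]
  constructor
  · rintro ⟨⟨⟨a, i⟩, ⟨b, j⟩⟩, h1, h2, h3, rfl⟩
    simp only [copy0, mem_filter, mem_univ, true_and] at h1 h2
    rw [adj_iff] at h3
    dsimp only at h1 h2 h3 ⊢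
    subst h1
    rcases fin2 j with rfl | rfl
    · exact absurd rfl h2
    · rcases h3 with ⟨_, h⟩ | ⟨_, rfl⟩
      · exact absurd h (by decide)
      · exact ⟨a, rfl⟩
  · rintro ⟨a, rfl⟩
    refine ⟨((a, 0), (a, 1)), ?_, ?_, ?_, rfl⟩
    · simp [copy0]
    · simp [copy0]
    · rw [adj_iff]; right; refine ⟨?_, rfl⟩; dsimp only; decide

lemma compl_copy0 : (copy0 n)ᶜ = Finset.univ.filter (fun v : VV n => v.2 = 1) := by
  ext ⟨a, i⟩
  simp only [Finset.mem_compl, copy0, mem_filter, mem_univ, true_and]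
  rcases fin2 i with rfl | rfl <;> simp

/-- rows present in copy 0 / copy 1 -/
noncomputable def Aset (S : Finset (VV n)) : Finset (Fin n) :=
  Finset.univ.filter (fun a => (a, (0 : Fin 2)) ∈ S)

noncomputable def Bset (S : Finset (VV n)) : Finset (Fin n) :=
  Finset.univ.filter (fun a => (a, (1 : Fin 2)) ∈ S)

lemma mem_S_iff (S : Finset (VV n)) (x : Fin n) (i : Fin 2) :
    (x, i) ∈ S ↔ (i = 0 ∧ x ∈ Aset n S) ∨ (i = 1 ∧ x ∈ Bset n S) := by
  rcases fin2 i with rfl | rfl <;> simp [Aset, Bset]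

lemma card_cross (S : Finset (VV n)) :
    (cross n S).card =
      (Aset n S).card * ((Aset n S)ᶜ).card + (Bset n S).card * ((Bset n S)ᶜ).card
        + (Aset n S \ Bset n S).card + (Bset n S \ Aset n S).card := by
  set A := Aset n S with hA
  set B := Bset n S with hB
  set f00 : Fin n × Fin n → VV n × VV n := fun q => ((q.1, 0), (q.2, 0)) with hf00
  set f11 : Fin n × Fin n → VV n × VV n := fun q => ((q.1, 1), (q.2, 1)) with hf11
  set f01 : Fin n → VV n × VV n := fun a => ((a, 0), (a, 1)) with hf01
  set f10 : Fin n → VV n × VV n := fun a => ((a, 1), (a, 0)) with hf10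
  have hsplit : cross n S = (((A ×ˢ Aᶜ).image f00 ∪ (B ×ˢ Bᶜ).image f11) ∪ (A \ B).image f01)
      ∪ (B \ A).image f10 := by
    ext ⟨⟨x, i⟩, ⟨y, j⟩⟩
    simp only [cross, mem_filter, mem_univ, true_and, mem_union, mem_image, mem_product,
      Finset.mem_compl, mem_sdiff, hf00, hf11, hf01, hf10, Prod.mk.injEq, Prod.exists,
      adj_iff, mem_S_iff, ← hA, ← hB]
    rcases fin2 i with rfl | rfl <;> rcases fin2 j with rfl | rfl <;>
      simp (config := { decide := true }) <;> aesop
  have d1 : Disjoint ((A ×ˢ Aᶜ).image f00) ((B ×ˢ Bᶜ).image f11) := by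
    simp only [Finset.disjoint_left, mem_image, Prod.exists]
    rintro p ⟨a, b, _, rfl⟩ ⟨c, d, _, h⟩
    simp [hf00, hf11, Prod.ext_iff] at h
  have d2 : Disjoint (((A ×ˢ Aᶜ).image f00 ∪ (B ×ˢ Bᶜ).image f11)) ((A \ B).image f01) := by
    simp only [Finset.disjoint_left, mem_union, mem_image, Prod.exists]
    rintro p (⟨a, b, _, rfl⟩ | ⟨a, b, _, rfl⟩) ⟨c, _, h⟩ <;>
      simp [hf00, hf11, hf01, Prod.ext_iff] at h
  have d3 : Disjoint ((((A ×ˢ Aᶜ).image f00 ∪ (B ×ˢ Bᶜ).image f11)) ∪ (A \ B).image f01)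
      ((B \ A).image f10) := by
    simp only [Finset.disjoint_left, mem_union, mem_image, Prod.exists]
    rintro p ((⟨a, b, _, rfl⟩ | ⟨a, b, _, rfl⟩) | ⟨a, _, rfl⟩) ⟨c, _, h⟩ <;>
      simp [hf00, hf11, hf01, hf10, Prod.ext_iff] at h
  have i00 : Function.Injective f00 := by
    intro q q' h; simp only [hf00, Prod.mk.injEq] at h; exact Prod.ext h.1.1 h.2.1
  have i11 : Function.Injective f11 := by
    intro q q' h; simp only [hf11, Prod.mk.injEq] at h; exact Prod.ext h.1.1 h.2.1
  have i01 : Function.Injective f01 := by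
    intro q q' h; simp only [hf01, Prod.mk.injEq] at h; exact h.1.1
  have i10 : Function.Injective f10 := by
    intro q q' h; simp only [hf10, Prod.mk.injEq] at h; exact h.1.1
  rw [hsplit, Finset.card_union_of_disjoint d3, Finset.card_union_of_disjoint d2,
    Finset.card_union_of_disjoint d1, Finset.card_image_of_injective _ i00,
    Finset.card_image_of_injective _ i11, Finset.card_image_of_injective _ i01,
    Finset.card_image_of_injective _ i10, Finset.card_product, Finset.card_product]

lemma cross_card_compl (S : Finset (VV n)) : (cross n Sᶜ).card = (cross n S).card := by
  rw [← card_cutEdges, ← card_cutEdges, cutEdges_compl]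

lemma Aset_singleton0 (x : Fin n) : Aset n {(x, (0 : Fin 2))} = {x} := by
  ext a; simp [Aset, Prod.ext_iff]

lemma Bset_singleton0 (x : Fin n) : Bset n {(x, (0 : Fin 2))} = ∅ := by
  ext a; simp [Bset, Prod.ext_iff]

lemma Aset_singleton1 (x : Fin n) : Aset n {(x, (1 : Fin 2))} = ∅ := by
  ext a; simp [Aset, Prod.ext_iff]

lemma Bset_singleton1 (x : Fin n) : Bset n {(x, (1 : Fin 2))} = {x} := by
  ext a; simp [Bset, Prod.ext_iff]

lemma card_cross_singleton (hn : 1 ≤ n) (v : VV n) : (cross n {v}).card = n := by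
  obtain ⟨x, i⟩ := v
  rcases fin2 i with rfl | rfl <;>
    · rw [card_cross]
      simp only [Aset_singleton0, Bset_singleton0, Aset_singleton1, Bset_singleton1,
        Finset.card_compl, Finset.card_singleton, Finset.card_empty, Fintype.card_fin,
        Finset.sdiff_empty, Finset.empty_sdiff]
      simp only [Nat.mul_zero, Nat.zero_mul, Nat.mul_sub_one]
      omega

lemma Aset_copy0 : Aset n (copy0 n) = Finset.univ := by
  ext a; simp [Aset, copy0]

lemma Bset_copy0 : Bset n (copy0 n) = ∅ := by
  ext a; simp [Bset, copy0]

lemma card_cross_copy0 : (cross n (copy0 n)).card = n := by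
  rw [card_cross, Aset_copy0, Bset_copy0]
  simp

lemma arith {n a b d1 d2 : ℤ} (hn : 3 ≤ n) (han : a ≤ n) (hbn : b ≤ n)
    (hd10 : 0 ≤ d1) (hd1 : a ≤ d1 + b) (hd20 : 0 ≤ d2) (hd2 : b ≤ d2 + a)
    (ha0 : 0 ≤ a) (hb0 : 0 ≤ b)
    (hne : 1 ≤ a + b) (hnu : a + b ≤ 2 * n - 1)
    (htot : a * (n - a) + b * (n - b) + d1 + d2 ≤ n) :
    (a = 1 ∧ b = 0) ∨ (a = 0 ∧ b = 1) ∨ (a = n ∧ b = 0) ∨ (a = 0 ∧ b = n) ∨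
      (a = n ∧ b = n - 1) ∨ (a = n - 1 ∧ b = n) := by
  rcases (show a = 0 ∨ a = n ∨ (1 ≤ a ∧ a ≤ n - 1) by omega) with ha | ha | ⟨ha1, ha2⟩ <;>
      rcases (show b = 0 ∨ b = n ∨ (1 ≤ b ∧ b ≤ n - 1) by omega) with hb | hb | ⟨hb1, hb2⟩
  · omega
  · omega
  · -- a = 0, b middle : b = 1
    have h2 : ¬ (2 ≤ b) := by
      intro h
      nlinarith [mul_nonneg (by omega : (0:ℤ) ≤ b - 2) (by omega : (0:ℤ) ≤ n - 1 - b)]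
    omega
  · omega
  · omega
  · -- a = n, b middle : b = n - 1
    have h2 : ¬ (b ≤ n - 2) := by
      intro h
      nlinarith [mul_nonneg (by omega : (0:ℤ) ≤ b - 1) (by omega : (0:ℤ) ≤ n - 2 - b)]
    omega
  · -- a middle, b = 0 : a = 1
    have h2 : ¬ (2 ≤ a) := by
      intro h
      nlinarith [mul_nonneg (by omega : (0:ℤ) ≤ a - 2) (by omega : (0:ℤ) ≤ n - 1 - a)]
    omega
  · -- a middle, b = n : a = n - 1
    have h2 : ¬ (a ≤ n - 2) := by
      intro h
      nlinarith [mul_nonneg (by omega : (0:ℤ) ≤ a - 1) (by omega : (0:ℤ) ≤ n - 2 - a)]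
    omega
  · -- both middle : impossible
    exfalso
    nlinarith [mul_nonneg (by omega : (0:ℤ) ≤ a - 1) (by omega : (0:ℤ) ≤ n - 1 - a),
      mul_nonneg (by omega : (0:ℤ) ≤ b - 1) (by omega : (0:ℤ) ≤ n - 1 - b)]

lemma main_classify (hn : 3 ≤ n) (S : Finset (VV n)) (hne : S.Nonempty)
    (hpr : S ≠ Finset.univ) (htot : (cross n S).card ≤ n) :
    ((∃ v, (cutEdges n S : Set (Sym2 (VV n))) = star n v) ∨
        (cutEdges n S : Set (Sym2 (VV n))) = M n) ∧ (cross n S).card = n := by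
  have hcard := card_cross n S
  set A := Aset n S with hA
  set B := Bset n S with hB
  have hAcompl : Aᶜ.card = n - A.card := by rw [Finset.card_compl, Fintype.card_fin]
  have hBcompl : Bᶜ.card = n - B.card := by rw [Finset.card_compl, Fintype.card_fin]
  have hAn : A.card ≤ n := by simpa using A.card_le_univ
  have hBn : B.card ≤ n := by simpa using B.card_le_univ
  have hsubA : A.card ≤ (A \ B).card + B.card := by
    refine le_trans (Finset.card_le_card (fun x hx => ?_)) (Finset.card_union_le _ _)
    by_cases h : x ∈ B <;> simp [Finset.mem_union, Finset.mem_sdiff, hx, h]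
  have hsubB : B.card ≤ (B \ A).card + A.card := by
    refine le_trans (Finset.card_le_card (fun x hx => ?_)) (Finset.card_union_le _ _)
    by_cases h : x ∈ A <;> simp [Finset.mem_union, Finset.mem_sdiff, hx, h]
  have hdA : (A \ B).card ≤ A.card := Finset.card_le_card Finset.sdiff_subset
  have hdB : (B \ A).card ≤ B.card := Finset.card_le_card Finset.sdiff_subset
  have hne' : 1 ≤ A.card + B.card := by
    obtain ⟨⟨x, i⟩, hx⟩ := hne
    rw [mem_S_iff] at hx
    rcases hx with ⟨_, hx⟩ | ⟨_, hx⟩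
    · have : A.Nonempty := ⟨x, hx⟩
      have := Finset.card_pos.mpr this; omega
    · have : B.Nonempty := ⟨x, hx⟩
      have := Finset.card_pos.mpr this; omega
  have hpr' : A.card + B.card ≤ 2 * n - 1 := by
    by_contra h
    push_neg at h
    have hAu : A = Finset.univ := Finset.eq_univ_of_card _ (by rw [Fintype.card_fin]; omega)
    have hBu : B = Finset.univ := Finset.eq_univ_of_card _ (by rw [Fintype.card_fin]; omega)
    apply hpr
    ext ⟨x, i⟩
    rw [mem_S_iff, ← hA, ← hB, hAu, hBu]
    rcases fin2 i with rfl | rfl <;> simp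
  have hcases := arith (n := (n : ℤ)) (a := (A.card : ℤ)) (b := (B.card : ℤ))
    (d1 := ((A \ B).card : ℤ)) (d2 := ((B \ A).card : ℤ))
    (by omega) (by omega) (by omega) (by omega) (by omega) (by omega) (by omega)
    (by omega) (by omega) (by omega) (by omega)
    (by push_cast [← Nat.cast_sub hAn, ← Nat.cast_sub hBn, ← hAcompl, ← hBcompl]
        exact_mod_cast (hcard ▸ htot))
  rcases hcases with ⟨ha, hb⟩ | ⟨ha, hb⟩ | ⟨ha, hb⟩ | ⟨ha, hb⟩ | ⟨ha, hb⟩ | ⟨ha, hb⟩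
  · -- A = {x}, B = ∅ : S = {(x,0)}
    obtain ⟨x, hx⟩ := Finset.card_eq_one.mp (show A.card = 1 by omega)
    have hBe : B = ∅ := Finset.card_eq_zero.mp (by omega)
    have hS : S = {(x, (0 : Fin 2))} := by
      ext ⟨y, i⟩
      rw [mem_S_iff, ← hA, ← hB, hx, hBe]
      rcases fin2 i with rfl | rfl <;> simp [Prod.ext_iff]
    rw [hS]
    exact ⟨Or.inl ⟨_, cutEdges_singleton n _⟩, card_cross_singleton n (by omega) _⟩
  · -- A = ∅, B = {x} : S = {(x,1)}
    obtain ⟨x, hx⟩ := Finset.card_eq_one.mp (show B.card = 1 by omega)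
    have hAe : A = ∅ := Finset.card_eq_zero.mp (by omega)
    have hS : S = {(x, (1 : Fin 2))} := by
      ext ⟨y, i⟩
      rw [mem_S_iff, ← hA, ← hB, hx, hAe]
      rcases fin2 i with rfl | rfl <;> simp [Prod.ext_iff]
    rw [hS]
    exact ⟨Or.inl ⟨_, cutEdges_singleton n _⟩, card_cross_singleton n (by omega) _⟩
  · -- A = univ, B = ∅ : S = copy0
    have hAu : A = Finset.univ := Finset.eq_univ_of_card _ (by rw [Fintype.card_fin]; omega)
    have hBe : B = ∅ := Finset.card_eq_zero.mp (by omega)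
    have hS : S = copy0 n := by
      ext ⟨y, i⟩
      rw [mem_S_iff, ← hA, ← hB, hAu, hBe]
      rcases fin2 i with rfl | rfl <;> simp [copy0]
    rw [hS]
    exact ⟨Or.inr (cutEdges_copy0 n), card_cross_copy0 n⟩
  · -- A = ∅, B = univ : S = (copy0)ᶜ
    have hBu : B = Finset.univ := Finset.eq_univ_of_card _ (by rw [Fintype.card_fin]; omega)
    have hAe : A = ∅ := Finset.card_eq_zero.mp (by omega)
    have hS : S = (copy0 n)ᶜ := by
      ext ⟨y, i⟩
      rw [mem_S_iff, ← hA, ← hB, hBu, hAe, compl_copy0]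
      rcases fin2 i with rfl | rfl <;> simp
    rw [hS, cutEdges_compl]
    exact ⟨Or.inr (cutEdges_copy0 n), by rw [cross_card_compl]; exact card_cross_copy0 n⟩
  · -- A = univ, Bᶜ = {x} : Sᶜ = {(x,1)}
    have hAu : A = Finset.univ := Finset.eq_univ_of_card _ (by rw [Fintype.card_fin]; omega)
    obtain ⟨x, hx⟩ := Finset.card_eq_one.mp (show Bᶜ.card = 1 by omega)
    have hS : Sᶜ = {(x, (1 : Fin 2))} := by
      ext ⟨y, i⟩
      rw [Finset.mem_compl, mem_S_iff, ← hA, ← hB, hAu]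
      have hy : y ∉ B ↔ y = x := by
        rw [← Finset.mem_compl, hx, Finset.mem_singleton]
      rcases fin2 i with rfl | rfl <;> simp [Prod.ext_iff, hy]
    rw [← cutEdges_compl, hS, ← cross_card_compl, hS]
    exact ⟨Or.inl ⟨_, cutEdges_singleton n _⟩, card_cross_singleton n (by omega) _⟩
  · -- B = univ, Aᶜ = {x} : Sᶜ = {(x,0)}
    have hBu : B = Finset.univ := Finset.eq_univ_of_card _ (by rw [Fintype.card_fin]; omega)
    obtain ⟨x, hx⟩ := Finset.card_eq_one.mp (show Aᶜ.card = 1 by omega)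
    have hS : Sᶜ = {(x, (0 : Fin 2))} := by
      ext ⟨y, i⟩
      rw [Finset.mem_compl, mem_S_iff, ← hA, ← hB, hBu]
      have hy : y ∉ A ↔ y = x := by
        rw [← Finset.mem_compl, hx, Finset.mem_singleton]
      rcases fin2 i with rfl | rfl <;> simp [Prod.ext_iff, hy]
    rw [← cutEdges_compl, hS, ← cross_card_compl, hS]
    exact ⟨Or.inl ⟨_, cutEdges_singleton n _⟩, card_cross_singleton n (by omega) _⟩

lemma reachable_eq {W α : Type*} {H : SimpleGraph W} {f : W → α}
    (hf : ∀ x y, H.Adj x y → f x = f y) {u v : W} (h : H.Reachable u v) : f u = f v := by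
  obtain ⟨p⟩ := h
  induction p with
  | nil => rfl
  | cons h _ ih => exact (hf _ _ h).trans ih

lemma star_subset (v : VV n) : star n v ⊆ (GG n).edgeSet := fun _ he => he.1

lemma M_subset : M n ⊆ (GG n).edgeSet := by
  rintro e ⟨a, rfl⟩
  rw [SimpleGraph.mem_edgeSet, adj_iff]
  right
  refine ⟨?_, rfl⟩
  dsimp only
  decide

lemma exists_other (v : VV n) : ∃ j : Fin 2, j ≠ v.2 := by
  rcases fin2 v.2 with h | h <;> rw [h]
  · exact ⟨1, by decide⟩
  · exact ⟨0, by decide⟩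

lemma star_isEdgeCut (hn : 3 ≤ n) (v : VV n) : IsEdgeCut (GG n) (star n v) := by
  refine ⟨star_subset n v, fun hconn => ?_⟩
  have hadj : ∀ x y, ((GG n).deleteEdges (star n v)).Adj x y → (x = v) = (y = v) := by
    intro x y hxy
    rw [SimpleGraph.deleteEdges_adj] at hxy
    have hx : x ≠ v := by
      rintro rfl
      exact hxy.2 ⟨(GG n).mem_edgeSet.mpr hxy.1, Sym2.mem_mk_left _ _⟩
    have hy : y ≠ v := by
      rintro rfl
      exact hxy.2 ⟨(GG n).mem_edgeSet.mpr hxy.1, Sym2.mem_mk_right _ _⟩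
    simp [hx, hy]
  obtain ⟨j, hj⟩ := exists_other n v
  have hwne : (v.1, j) ≠ v := by
    intro h
    exact hj (by rw [← h])
  have := reachable_eq hadj (hconn.preconnected v (v.1, j))
  exact hwne ((this : (v = v) = ((v.1, j) = v)) ▸ rfl)

lemma M_isEdgeCut (hn : 3 ≤ n) : IsEdgeCut (GG n) (M n) := by
  refine ⟨M_subset n, fun hconn => ?_⟩
  have hadj : ∀ x y, ((GG n).deleteEdges (M n)).Adj x y → x.2 = y.2 := by
    intro x y hxy
    rw [SimpleGraph.deleteEdges_adj, adj_iff] at hxy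
    rcases hxy.1 with ⟨_, h⟩ | ⟨h2, h1⟩
    · exact h
    · exfalso
      apply hxy.2
      rcases fin2 x.2 with hx2 | hx2 <;> rcases fin2 y.2 with hy2 | hy2
      · exact absurd (hx2.trans hy2.symm) h2
      · exact ⟨x.1, by rw [show x = (x.1, (0:Fin 2)) from Prod.ext rfl hx2,
          show y = (x.1, (1:Fin 2)) from Prod.ext h1.symm hy2]⟩
      · refine ⟨x.1, ?_⟩
        rw [show x = (x.1, (1:Fin 2)) from Prod.ext rfl hx2,
          show y = (x.1, (0:Fin 2)) from Prod.ext h1.symm hy2]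
        exact Sym2.eq_swap
      · exact absurd (hx2.trans hy2.symm) h2
  have h0 : (0 : Fin 2) = 1 :=
    reachable_eq hadj (hconn.preconnected (⟨0, by omega⟩, 0) (⟨0, by omega⟩, 1))
  exact absurd h0 (by decide)

lemma exists_cut (hn : 3 ≤ n) {X : Set (Sym2 (VV n))} (hX : IsEdgeCut (GG n) X) :
    ∃ S : Finset (VV n), S.Nonempty ∧ S ≠ Finset.univ ∧
      (cutEdges n S : Set (Sym2 (VV n))) ⊆ X := by
  obtain ⟨hsub, hconn⟩ := hX
  rw [SimpleGraph.connected_iff] at hconn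
  push_neg at hconn
  have hne : Nonempty (VV n) := ⟨(⟨0, by omega⟩, 0)⟩
  obtain ⟨u, v, huv⟩ : ∃ u v : VV n, ¬ ((GG n).deleteEdges X).Reachable u v := by
    by_contra h
    push_neg at h
    exact (hconn (fun a b => h a b)).false hne.some
  refine ⟨Finset.univ.filter (fun w => ((GG n).deleteEdges X).Reachable u w), ⟨u, ?_⟩, ?_, ?_⟩
  · simp only [mem_filter, mem_univ, true_and]
    exact SimpleGraph.Reachable.refl u
  · intro h
    apply huv
    have : v ∈ Finset.univ.filter (fun w => ((GG n).deleteEdges X).Reachable u w) := by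
      rw [h]; exact Finset.mem_univ v
    simpa using this
  · intro e he
    rw [Finset.mem_coe, mem_cutEdges] at he
    obtain ⟨⟨x, y⟩, h1, h2, h3, rfl⟩ := he
    simp only [mem_filter, mem_univ, true_and] at h1 h2
    by_contra hx
    exact h2 (h1.trans (SimpleGraph.Adj.reachable (by
      rw [SimpleGraph.deleteEdges_adj]; exact ⟨h3, hx⟩)))

lemma edgeCut_lower (hn : 3 ≤ n) {X : Set (Sym2 (VV n))} (hX : IsEdgeCut (GG n) X) :
    n ≤ X.ncard := by
  obtain ⟨S, hSne, hSpr, hsub⟩ := exists_cut n hn hX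
  have h1 : n ≤ (cross n S).card := by
    by_contra h
    push_neg at h
    exact absurd (main_classify n hn S hSne hSpr h.le).2 (by omega)
  calc n ≤ (cross n S).card := h1
    _ = (cutEdges n S : Set (Sym2 (VV n))).ncard := by
        rw [Set.ncard_coe_finset, card_cutEdges]
    _ ≤ X.ncard := Set.ncard_le_ncard hsub (Set.toFinite X)

lemma star_ncard (hn : 3 ≤ n) (v : VV n) : (star n v).ncard = n := by
  rw [← cutEdges_singleton, Set.ncard_coe_finset, card_cutEdges,
    card_cross_singleton n (by omega)]

lemma M_ncard (hn : 3 ≤ n) : (M n).ncard = n := by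
  rw [← cutEdges_copy0, Set.ncard_coe_finset, card_cutEdges, card_cross_copy0]

lemma star_isMinCut (hn : 3 ≤ n) (v : VV n) : IsMinCut (GG n) (star n v) :=
  ⟨star_isEdgeCut n hn v, fun _ hY => by
    rw [star_ncard n hn]; exact edgeCut_lower n hn hY⟩

lemma M_isMinCut (hn : 3 ≤ n) : IsMinCut (GG n) (M n) :=
  ⟨M_isEdgeCut n hn, fun _ hY => by
    rw [M_ncard n hn]; exact edgeCut_lower n hn hY⟩

lemma isMinCut_iff (hn : 3 ≤ n) (X : Set (Sym2 (VV n))) :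
    IsMinCut (GG n) X ↔ (∃ v, X = star n v) ∨ X = M n := by
  constructor
  · rintro ⟨hXcut, hmin⟩
    have hXn : X.ncard ≤ n := by
      have := hmin (star n (⟨0, by omega⟩, 0)) (star_isEdgeCut n hn _)
      rwa [star_ncard n hn] at this
    obtain ⟨S, hSne, hSpr, hsub⟩ := exists_cut n hn hXcut
    have hcc : (cross n S).card ≤ n := by
      have h2 : (cutEdges n S : Set (Sym2 (VV n))).ncard ≤ X.ncard :=
        Set.ncard_le_ncard hsub (Set.toFinite X)
      rw [Set.ncard_coe_finset, card_cutEdges] at h2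
      omega
    obtain ⟨hstruct, hcardn⟩ := main_classify n hn S hSne hSpr hcc
    have hXeq : (cutEdges n S : Set (Sym2 (VV n))) = X := by
      refine Set.eq_of_subset_of_ncard_le hsub ?_ (Set.toFinite _)
      rw [Set.ncard_coe_finset, card_cutEdges]
      omega
    rw [← hXeq]
    exact hstruct
  · rintro (⟨v, rfl⟩ | rfl)
    · exact star_isMinCut n hn v
    · exact M_isMinCut n hn

lemma star_injective (hn : 3 ≤ n) {v w : VV n} (h : star n v = star n w) : v = w := by
  by_contra hvw
  obtain ⟨y, hy⟩ : ∃ y : Fin n, y ≠ v.1 :=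
    Fintype.exists_ne_of_one_lt_card (by rw [Fintype.card_fin]; omega) v.1
  obtain ⟨j, hj⟩ := exists_other n v
  have hadj1 : (GG n).Adj v (y, v.2) := by
    rw [adj_iff]; exact Or.inl ⟨fun hh => hy hh.symm, rfl⟩
  have hadj2 : (GG n).Adj v (v.1, j) := by
    rw [adj_iff]; exact Or.inr ⟨fun hh => hj hh.symm, rfl⟩
  have key : ∀ u : VV n, (GG n).Adj v u → w = u := by
    intro u hu
    have h1 : s(v, u) ∈ star n w := by
      rw [← h]
      exact ⟨(GG n).mem_edgeSet.mpr hu, Sym2.mem_mk_left _ _⟩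
    rcases Sym2.mem_iff.mp h1.2 with h2 | h2
    · exact absurd h2 (Ne.symm hvw)
    · exact h2
  have e1 := key _ hadj1
  have e2 := key _ hadj2
  rw [e2] at e1
  exact hy (congrArg Prod.fst e1).symm

lemma star_ne_M (hn : 3 ≤ n) (v : VV n) : star n v ≠ M n := by
  intro h
  obtain ⟨y, hy⟩ : ∃ y : Fin n, y ≠ v.1 :=
    Fintype.exists_ne_of_one_lt_card (by rw [Fintype.card_fin]; omega) v.1
  have hadj : (GG n).Adj v (y, v.2) := by
    rw [adj_iff]; exact Or.inl ⟨fun hh => hy hh.symm, rfl⟩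
  have h1 : s(v, (y, v.2)) ∈ M n := by
    rw [← h]
    exact ⟨(GG n).mem_edgeSet.mpr hadj, Sym2.mem_mk_left _ _⟩
  obtain ⟨a, ha⟩ := h1
  rcases Sym2.eq_iff.mp ha with ⟨h2, h3⟩ | ⟨h2, h3⟩
  · exact hy ((congrArg Prod.fst h3).trans (congrArg Prod.fst h2).symm)
  · exact hy ((congrArg Prod.fst h3).trans (congrArg Prod.fst h2).symm)

lemma M_inter_star (v : VV n) : (M n ∩ star n v).Nonempty := by
  refine ⟨s((v.1, 0), (v.1, 1)), ⟨v.1, rfl⟩, ?_, ?_⟩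
  · rw [SimpleGraph.mem_edgeSet, adj_iff]
    right
    refine ⟨?_, rfl⟩
    dsimp only
    decide
  · rw [Sym2.mem_iff]
    rcases fin2 v.2 with hv | hv
    · exact Or.inl (show v = (v.1, 0) from Prod.ext rfl hv)
    · exact Or.inr (show v = (v.1, 1) from Prod.ext rfl hv)

lemma star_inter_star {v w : VV n} (hvw : v ≠ w) :
    (star n v ∩ star n w).Nonempty ↔ (GG n).Adj v w := by
  constructor
  · rintro ⟨e, ⟨he, hv⟩, ⟨_, hw⟩⟩
    have : e = s(v, w) := (Sym2.mem_and_mem_iff hvw).mp ⟨hv, hw⟩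
    rw [this, SimpleGraph.mem_edgeSet] at he
    exact he
  · intro h
    exact ⟨s(v, w), ⟨(GG n).mem_edgeSet.mpr h, Sym2.mem_mk_left _ _⟩,
      ⟨(GG n).mem_edgeSet.mpr h, Sym2.mem_mk_right _ _⟩⟩

noncomputable def theEquiv (hn : 3 ≤ n) :
    Option (VV n) ≃ {X : Set (Sym2 (VV n)) // IsMinCut (GG n) X} :=
  Equiv.ofBijective
    (fun o => o.elim ⟨M n, M_isMinCut n hn⟩ (fun v => ⟨star n v, star_isMinCut n hn v⟩))
    (by
      constructor
      · rintro (_ | v) (_ | w) h <;> simp only [Option.elim, Subtype.mk.injEq] at h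
        · rfl
        · exact absurd h.symm (star_ne_M n hn w)
        · exact absurd h (star_ne_M n hn v)
        · rw [star_injective n hn h]
      · rintro ⟨X, hX⟩
        rcases (isMinCut_iff n hn X).mp hX with ⟨v, rfl⟩ | rfl
        · exact ⟨some v, rfl⟩
        · exact ⟨none, rfl⟩)

lemma theEquiv_none (hn : 3 ≤ n) : (theEquiv n hn none : Set (Sym2 (VV n))) = M n := rfl

lemma theEquiv_some (hn : 3 ≤ n) (v : VV n) :
    (theEquiv n hn (some v) : Set (Sym2 (VV n))) = star n v := rfl

lemma adj_char (hn : 3 ≤ n) (o1 o2 : Option (VV n)) :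
    (mincutGraph (GG n)).Adj (theEquiv n hn o1) (theEquiv n hn o2) ↔
      (vertexJoin (GG n)).Adj o1 o2 := by
  have hmc : ∀ A B : {X : Set (Sym2 (VV n)) // IsMinCut (GG n) X},
      (mincutGraph (GG n)).Adj A B ↔ A ≠ B ∧ ((A.1 ∩ B.1).Nonempty ∨ (B.1 ∩ A.1).Nonempty) :=
    fun A B => SimpleGraph.fromRel_adj _ A B
  have hvj : ∀ a b : Option (VV n), (vertexJoin (GG n)).Adj a b ↔ a ≠ b ∧
      (((a = none ∧ b ≠ none) ∨ ∃ x y : VV n, a = some x ∧ b = some y ∧ (GG n).Adj x y) ∨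
        ((b = none ∧ a ≠ none) ∨ ∃ x y : VV n, b = some x ∧ a = some y ∧ (GG n).Adj x y)) :=
    fun a b => SimpleGraph.fromRel_adj _ a b
  rcases o1 with _ | v <;> rcases o2 with _ | w
  · rw [hmc, hvj]
    simp
  · rw [hmc, hvj]
    constructor
    · intro _
      exact ⟨by simp, Or.inl (Or.inl ⟨rfl, by simp⟩)⟩
    · intro _
      refine ⟨?_, Or.inl (M_inter_star n w)⟩
      intro hh
      exact star_ne_M n hn w ((congrArg Subtype.val hh).symm)
  · rw [hmc, hvj]
    constructor
    · intro _
      exact ⟨by simp, Or.inr (Or.inl ⟨rfl, by simp⟩)⟩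
    · intro _
      refine ⟨?_, Or.inr (M_inter_star n v)⟩
      intro hh
      exact star_ne_M n hn v (congrArg Subtype.val hh)
  · rw [hmc, hvj]
    constructor
    · rintro ⟨hne, hint⟩
      have hvw : v ≠ w := by
        rintro rfl
        exact hne rfl
      have hadj : (GG n).Adj v w := by
        rcases hint with h | h
        · exact (star_inter_star n hvw).mp h
        · exact ((star_inter_star n hvw.symm).mp h).symm
      exact ⟨by simp [hvw], Or.inl (Or.inr ⟨v, w, rfl, rfl, hadj⟩)⟩
    · rintro ⟨hne, hint⟩
      have hadj : (GG n).Adj v w := by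
        rcases hint with (⟨h, _⟩ | ⟨x, y, hx, hy, h⟩) | (⟨h, _⟩ | ⟨x, y, hx, hy, h⟩)
        · exact absurd h (by simp)
        · rw [Option.some.injEq] at hx hy
          rw [hx, hy]
          exact h
        · exact absurd h (by simp)
        · rw [Option.some.injEq] at hx hy
          rw [hx, hy]
          exact h.symm
      refine ⟨?_, Or.inl ((star_inter_star n hadj.ne).mpr hadj)⟩
      intro hh
      exact hadj.ne (star_injective n hn (congrArg Subtype.val hh))

end MincutAux

theorem mincutGraph_boxProd_complete (n : ℕ) (hn : 3 ≤ n) :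
    Nonempty (mincutGraph ((⊤ : SimpleGraph (Fin n)) □ (⊤ : SimpleGraph (Fin 2)))
      ≃g vertexJoin ((⊤ : SimpleGraph (Fin n)) □ (⊤ : SimpleGraph (Fin 2)))) := by
  exact ⟨(SimpleGraph.Iso.symm ⟨MincutAux.theEquiv n hn, fun {a b} => MincutAux.adj_char n hn a b⟩)⟩
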